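/- ∏_{n≥0} [((n+1)(2n+2)) / ((n+2)(2n+3))]^{(-1)^{t_n}} = √2/2. -/

import Mathlib

open Filter Finset Topology
noncomputable section

def tm (n : ℕ) : ℕ := (Nat.digits 2 n).sum % 2

def ee (n : ℕ) : ℤ := (-1) ^ tm n

lemma tm0 : tm 0 = 0 := by simp [tm]
lemma ee0 : ee 0 = 1 := by simp [ee, tm0]

lemma tm_even (n : ℕ) : tm (2 * n) = tm n := by
  rcases Nat.eq_zero_or_pos n with h | h
  · simp [h]
  · unfold tm
    rw [Nat.digits_def' (by norm_num : 1 < 2) (by omega)]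
    have h1 : (2 * n) % 2 = 0 := by omega
    have h2 : (2 * n) / 2 = n := by omega
    rw [h1, h2]
    simp

lemma tm_odd (n : ℕ) : tm (2 * n + 1) = (tm n + 1) % 2 := by
  unfold tm
  rw [Nat.digits_def' (by norm_num : 1 < 2) (by omega)]
  have h1 : (2 * n + 1) % 2 = 1 := by omega
  have h2 : (2 * n + 1) / 2 = n := by omega
  rw [h1, h2]
  simp [List.sum_cons]
  omega

lemma ee_even (n : ℕ) : ee (2 * n) = ee n := by unfold ee; rw [tm_even]

lemma ee_odd (n : ℕ) : ee (2 * n + 1) = - ee n := by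
  unfold ee
  rw [tm_odd]
  rcases Nat.mod_two_eq_zero_or_one (tm n) with h | h
  · have : tm n % 2 = 0 := h
    have h2 : (tm n + 1) % 2 = 1 := by omega
    rw [h2]
    rw [← Nat.div_add_mod (tm n) 2, h]
    simp [pow_add, pow_mul]
  · have h2 : (tm n + 1) % 2 = 0 := by omega
    rw [h2]
    rw [← Nat.div_add_mod (tm n) 2, h]
    simp [pow_add, pow_mul]

lemma ee_cases (n : ℕ) : ee n = 1 ∨ ee n = -1 := by
  unfold ee
  rcases Nat.even_or_odd (tm n) with h | h
  · left; exact h.neg_one_pow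
  · right; exact h.neg_one_pow

def aa (n : ℕ) : ℝ := (((n:ℝ) + 1) * (2 * (n:ℝ) + 2)) / (((n:ℝ) + 2) * (2 * (n:ℝ) + 3))
def pp (n : ℕ) : ℝ := (2 * (n:ℝ) + 1) / (2 * (n:ℝ) + 2)
def cc (n : ℕ) : ℝ := (2 * (n:ℝ) + 2) / (2 * (n:ℝ) + 3)
def fr (n : ℕ) : ℝ := ((n:ℝ) + 1) / (n:ℝ)

def SS (N : ℕ) : ℝ := ∏ n ∈ range N, aa n ^ ee n
def PP (N : ℕ) : ℝ := ∏ n ∈ range N, pp n ^ ee n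
def WW (N : ℕ) : ℝ := ∏ n ∈ Ico N (2 * N), fr n ^ ee n
def UU (N : ℕ) : ℝ := ∏ n ∈ Ico N (2 * N), cc n ^ ee n

lemma aa_pos (n : ℕ) : 0 < aa n := by
  unfold aa; positivity

lemma pp_pos (n : ℕ) : 0 < pp n := by unfold pp; positivity

lemma cc_pos (n : ℕ) : 0 < cc n := by unfold cc; positivity

lemma zpow_div_helper (x y z : ℝ) (hy : y ≠ 0) (e : ℤ) (h : x = z * y) :
    x ^ e * y ^ (-e) = z ^ e := by
  rw [zpow_neg, h, mul_zpow]
  field_simp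

lemma sq_zpow (x : ℝ) (e : ℤ) : (x ^ 2) ^ e = (x ^ e) ^ 2 := by
  rw [← zpow_natCast x 2, ← zpow_mul, mul_comm, zpow_mul, zpow_natCast]

lemma ico_split (g : ℕ → ℝ) (N : ℕ) (hN : 1 ≤ N) :
    (∏ n ∈ Ico (N + 1) (2 * (N + 1)), g n) * g N
      = (∏ n ∈ Ico N (2 * N), g n) * g (2 * N) * g (2 * N + 1) := by
  rw [show 2 * (N + 1) = (2 * N + 1) + 1 by ring,
    Finset.prod_Ico_succ_top (by omega), Finset.prod_Ico_succ_top (by omega)]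
  conv_rhs => rw [Finset.prod_eq_prod_Ico_succ_bot (by omega : N < 2 * N)]
  ring

lemma prod_range_two_mul (f : ℕ → ℝ) (N : ℕ) :
    ∏ n ∈ range (2 * N), f n = ∏ m ∈ range N, (f (2 * m) * f (2 * m + 1)) := by
  induction N with
  | zero => simp
  | succ N ih =>
    rw [show 2 * (N + 1) = (2 * N + 1) + 1 by ring, prod_range_succ, prod_range_succ,
      ih, prod_range_succ]
    ring

lemma tm1 : tm 1 = 1 := by
  have := tm_odd 0
  simpa [tm0] using this

lemma ee1 : ee 1 = -1 := by
  have := ee_odd 0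
  simpa [ee0] using this

lemma fr_key (N : ℕ) (hN : 1 ≤ N) : fr (2 * N) = (fr N * pp N ^ 2) * fr (2 * N + 1) := by
  have h : (1:ℝ) ≤ (N:ℝ) := by exact_mod_cast hN
  unfold fr pp
  push_cast
  have h1 : (N:ℝ) ≠ 0 := by nlinarith
  have h2 : 2 * (N:ℝ) + 1 ≠ 0 := by nlinarith
  have h3 : 2 * (N:ℝ) + 2 ≠ 0 := by nlinarith
  field_simp
  ring

lemma fr_pos (n : ℕ) (hn : 1 ≤ n) : 0 < fr n := by
  unfold fr
  have : (0:ℝ) < (n:ℝ) := by exact_mod_cast hn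
  positivity

lemma I1 : ∀ N, 1 ≤ N → PP N ^ 2 * 2 = WW N := by
  intro N hN
  induction N with
  | zero => omega
  | succ N ih =>
    rcases Nat.eq_zero_or_pos N with h | h
    · subst h
      have : WW 1 = fr 1 ^ ee 1 := by
        unfold WW
        norm_num
      rw [this, ee1]
      unfold PP
      rw [prod_range_one, ee0]
      unfold fr pp
      norm_num
    · -- step
      have hfrN : fr N ^ ee N ≠ 0 := ne_of_gt (zpow_pos (fr_pos N h) _)
      have hsplit := ico_split (fun n => fr n ^ ee n) N h
      have hkey : fr (2 * N) ^ ee (2 * N) * fr (2 * N + 1) ^ ee (2 * N + 1)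
          = fr N ^ ee N * (pp N ^ ee N) ^ 2 := by
        rw [ee_even, ee_odd,
          zpow_div_helper _ _ _ (ne_of_gt (fr_pos (2 * N + 1) (by omega))) _ (fr_key N h),
          mul_zpow, sq_zpow]
      have hW : WW (N + 1) * fr N ^ ee N = WW N * (fr N ^ ee N * (pp N ^ ee N) ^ 2) := by
        unfold WW
        rw [hsplit, mul_assoc, hkey]
      have hP : PP (N + 1) = PP N * pp N ^ ee N := prod_range_succ _ _
      have := ih h
      apply mul_right_cancel₀ hfrN
      rw [hW, hP, ← this]
      ring



lemma aa_key (N : ℕ) :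
    aa (2 * N) ^ ee N * aa (2 * N + 1) ^ (-ee N) * cc N ^ ee N
      = pp N ^ ee N * cc (2 * N) ^ ee N * cc (2 * N + 1) ^ (-ee N) := by
  have h0 : (0:ℝ) ≤ (N:ℝ) := Nat.cast_nonneg N
  rcases ee_cases N with h | h <;> rw [h] <;>
    simp only [zpow_one, zpow_neg, zpow_one] <;>
    · unfold aa pp cc
      push_cast
      try simp only [inv_inv]
      field_simp
      ring

lemma I2 : ∀ N, SS (2 * N) = PP N * UU N := by
  intro N
  induction N with
  | zero => simp [SS, PP, UU]
  | succ N ih =>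
    have hS : SS (2 * (N + 1)) = SS (2 * N) * (aa (2 * N) ^ ee (2 * N) * aa (2 * N + 1) ^ ee (2 * N + 1)) := by
      unfold SS
      rw [show 2 * (N + 1) = (2 * N + 1) + 1 by ring, prod_range_succ, prod_range_succ]
      ring
    have hP : PP (N + 1) = PP N * pp N ^ ee N := prod_range_succ _ _
    rcases Nat.eq_zero_or_pos N with h | h
    · subst h
      rw [hS, hP, ih]
      have hU1 : UU 1 = cc 1 ^ ee 1 := by unfold UU; norm_num
      have hU0 : UU 0 = 1 := by unfold UU; norm_num
      have hP0 : PP 0 = 1 := by unfold PP; norm_num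
      rw [hU1, hU0, hP0, ee1, ee0, show (2:ℕ) * 0 = 0 from rfl, show (2:ℕ) * 0 + 1 = 1 from rfl]
      unfold aa pp cc
      norm_num
    · have hccN : cc N ^ ee N ≠ 0 := ne_of_gt (zpow_pos (cc_pos N) _)
      have hsplit := ico_split (fun n => cc n ^ ee n) N h
      have hU : UU (N + 1) * cc N ^ ee N
          = UU N * (cc (2 * N) ^ ee (2 * N) * cc (2 * N + 1) ^ ee (2 * N + 1)) := by
        unfold UU
        rw [hsplit]; ring
      apply mul_right_cancel₀ hccN
      rw [hS, ih, hP, mul_assoc (PP N * pp N ^ ee N), hU]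
      rw [ee_even, ee_odd] at *
      have := aa_key N
      calc PP N * UU N * (aa (2 * N) ^ ee N * aa (2 * N + 1) ^ (-ee N)) * cc N ^ ee N
          = PP N * UU N * (aa (2 * N) ^ ee N * aa (2 * N + 1) ^ (-ee N) * cc N ^ ee N) := by ring
        _ = PP N * UU N * (pp N ^ ee N * cc (2 * N) ^ ee N * cc (2 * N + 1) ^ (-ee N)) := by rw [this]
        _ = PP N * pp N ^ ee N * (UU N * (cc (2 * N) ^ ee N * cc (2 * N + 1) ^ (-ee N))) := by ring

lemma pair_prod (g : ℕ → ℝ) (M : ℕ) :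
    ∏ n ∈ Ico (2 * M) (2 * (2 * M)), g n ^ ee n
      = ∏ j ∈ range M, (g (2 * (M + j)) ^ ee (M + j) * g (2 * (M + j) + 1) ^ (-ee (M + j))) := by
  rw [Finset.prod_Ico_eq_prod_range]
  have h : 2 * (2 * M) - 2 * M = 2 * M := by omega
  rw [h, prod_range_two_mul]
  apply Finset.prod_congr rfl
  intro j _
  have e1 : 2 * M + 2 * j = 2 * (M + j) := by ring
  have e2 : 2 * M + (2 * j + 1) = 2 * (M + j) + 1 := by ring
  rw [e1, e2, ee_even, ee_odd]

lemma four_mul_tendsto (c d : ℕ) (hc : 1 ≤ c) : Tendsto (fun M : ℕ => c * M + d) atTop atTop := by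
  apply tendsto_atTop_atTop.mpr
  intro b
  exact ⟨b, fun a ha => by nlinarith⟩

lemma inv_lin_tendsto (a b : ℝ) (ha : 0 < a) (hb : 0 ≤ b) :
    Tendsto (fun n : ℕ => 1 / (a * (n : ℝ) + b)) atTop (𝓝 0) := by
  have h1 : Tendsto (fun n : ℕ => a * (n : ℝ) + b) atTop atTop := by
    apply tendsto_atTop_add_const_right
    exact (tendsto_natCast_atTop_atTop (R := ℝ)).const_mul_atTop ha
  simpa [one_div, Pi.inv_def] using h1.inv_tendsto_atTop

lemma exp_inv_tendsto : Tendsto (fun M : ℕ => Real.exp (1 / (4 * (M : ℝ)))) atTop (𝓝 1) := by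
  have h0 : Tendsto (fun M : ℕ => 1 / (4 * (M : ℝ))) atTop (𝓝 0) := inv_lin_tendsto 4 0 (by norm_num) le_rfl |>.congr (by intro n; norm_num)
  have := (Real.continuous_exp.tendsto 0).comp h0
  simpa [Function.comp_def] using this

lemma squeeze_main (H : ℕ → ℝ) (eps : ℕ → ℤ) (heps : ∀ n, eps n = 1 ∨ eps n = -1)
    (h1 : ∀ m : ℕ, 1 ≤ m → 1 ≤ H m)
    (h2 : ∀ m : ℕ, 1 ≤ m → H m ≤ 1 + (1 / (4 * (m:ℝ)) - 1 / (4 * ((m:ℝ) + 1)))) :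
    Tendsto (fun M => ∏ j ∈ range M, H (M + j) ^ eps (M + j)) atTop (𝓝 1) := by
  -- upper bound function
  set u : ℕ → ℝ := fun M => ∏ j ∈ range M, H (M + j) with hu
  have hH1 : ∀ M : ℕ, 1 ≤ M → ∀ j ∈ range M, (1:ℝ) ≤ H (M + j) := by
    intro M hM j _
    exact h1 _ (by omega)
  have hupos : ∀ M, 1 ≤ M → ∀ j ∈ range M, (0:ℝ) < H (M + j) := by
    intro M hM j hj
    linarith [hH1 M hM j hj]
  have hle : ∀ᶠ M in atTop, (fun M => ∏ j ∈ range M, H (M + j) ^ eps (M + j)) M ≤ u M := by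
    filter_upwards [eventually_ge_atTop 1] with M hM
    apply Finset.prod_le_prod
    · intro j hj
      exact le_of_lt (zpow_pos (hupos M hM j hj) _)
    · intro j hj
      rcases heps (M + j) with h | h
      · rw [h, zpow_one]
      · rw [h]
        calc H (M + j) ^ (-1 : ℤ) = (H (M + j))⁻¹ := by norm_num
          _ ≤ 1 := inv_le_one_of_one_le₀ (hH1 M hM j hj)
          _ ≤ H (M + j) := hH1 M hM j hj
  have hge : ∀ᶠ M in atTop, (u M)⁻¹ ≤ (fun M => ∏ j ∈ range M, H (M + j) ^ eps (M + j)) M := by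
    filter_upwards [eventually_ge_atTop 1] with M hM
    rw [hu]
    simp only
    rw [← Finset.prod_inv_distrib]
    apply Finset.prod_le_prod
    · intro j hj
      exact le_of_lt (inv_pos.mpr (hupos M hM j hj))
    · intro j hj
      rcases heps (M + j) with h | h
      · rw [h, zpow_one]
        calc (H (M + j))⁻¹ ≤ (1:ℝ) := inv_le_one_of_one_le₀ (hH1 M hM j hj)
          _ ≤ H (M + j) := hH1 M hM j hj
      · rw [h]
        norm_num
  have huub : ∀ M : ℕ, 1 ≤ M → u M ≤ Real.exp (1 / (4 * (M:ℝ))) := by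
    intro M hM
    have step : u M ≤ ∏ j ∈ range M, Real.exp (1 / (4 * ((M:ℝ) + j)) - 1 / (4 * ((M:ℝ) + j + 1))) := by
      apply Finset.prod_le_prod
      · intro j hj; exact le_of_lt (hupos M hM j hj)
      · intro j hj
        calc H (M + j) ≤ 1 + (1 / (4 * ((M + j : ℕ):ℝ)) - 1 / (4 * (((M + j : ℕ):ℝ) + 1))) := h2 _ (by omega)
          _ = (1 / (4 * ((M:ℝ) + j)) - 1 / (4 * ((M:ℝ) + j + 1))) + 1 := by push_cast; ring
          _ ≤ Real.exp (1 / (4 * ((M:ℝ) + j)) - 1 / (4 * ((M:ℝ) + j + 1))) := Real.add_one_le_exp _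
    rw [← Real.exp_sum] at step
    have hsum : ∑ j ∈ range M, (1 / (4 * ((M:ℝ) + j)) - 1 / (4 * ((M:ℝ) + j + 1)))
        = 1 / (4 * (M:ℝ)) - 1 / (4 * ((M:ℝ) + M)) := by
      calc ∑ j ∈ range M, (1 / (4 * ((M:ℝ) + j)) - 1 / (4 * ((M:ℝ) + j + 1)))
          = ∑ j ∈ range M, ((fun j : ℕ => 1 / (4 * ((M:ℝ) + j))) j
              - (fun j : ℕ => 1 / (4 * ((M:ℝ) + j))) (j + 1)) := by
            apply Finset.sum_congr rfl
            intro j _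
            push_cast
            ring
        _ = 1 / (4 * ((M:ℝ) + ((0:ℕ):ℝ))) - 1 / (4 * ((M:ℝ) + ((M:ℕ):ℝ))) :=
            Finset.sum_range_sub' _ M
        _ = 1 / (4 * (M:ℝ)) - 1 / (4 * ((M:ℝ) + M)) := by norm_num
    rw [hsum] at step
    refine le_trans step (Real.exp_le_exp.mpr ?_)
    have hMpos : (0:ℝ) < (M:ℝ) := by exact_mod_cast hM
    have : 0 ≤ 1 / (4 * ((M:ℝ) + M)) := by positivity
    linarith
  have hul : ∀ M : ℕ, 1 ≤ M → 1 ≤ u M := by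
    intro M hM
    calc (1:ℝ) = ∏ _j ∈ range M, (1:ℝ) := by simp
      _ ≤ ∏ j ∈ range M, H (M + j) := Finset.prod_le_prod (by simp) (fun j hj => hH1 M hM j hj)
  -- squeeze
  have hlow : Tendsto (fun M : ℕ => (Real.exp (1 / (4 * (M:ℝ))))⁻¹) atTop (𝓝 1) := by
    simpa using exp_inv_tendsto.inv₀ one_ne_zero
  refine tendsto_of_tendsto_of_tendsto_of_le_of_le' hlow exp_inv_tendsto ?_ ?_
  · filter_upwards [hge, eventually_ge_atTop 1] with M hM h1M
    refine le_trans ?_ hM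
    apply inv_anti₀
    · linarith [hul M h1M]
    · exact huub M h1M
  · filter_upwards [hle, eventually_ge_atTop 1] with M hM h1M
    exact le_trans hM (huub M h1M)

def GG (m : ℕ) : ℝ := (2 * (m:ℝ) + 1) ^ 2 / ((2 * (m:ℝ)) * (2 * (m:ℝ) + 2))
def KK (m : ℕ) : ℝ := ((4 * (m:ℝ) + 3) * (4 * (m:ℝ) + 4)) / ((4 * (m:ℝ) + 2) * (4 * (m:ℝ) + 5))

lemma GG_one_le (m : ℕ) (hm : 1 ≤ m) : 1 ≤ GG m := by
  have hx : (1:ℝ) ≤ (m:ℝ) := by exact_mod_cast hm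
  unfold GG
  rw [le_div_iff₀ (by nlinarith)]
  nlinarith

lemma KK_one_le (m : ℕ) (hm : 1 ≤ m) : 1 ≤ KK m := by
  have hx : (1:ℝ) ≤ (m:ℝ) := by exact_mod_cast hm
  unfold KK
  rw [le_div_iff₀ (by nlinarith)]
  nlinarith

lemma bound_aux (m : ℕ) (hm : 1 ≤ m) :
    1 + (1 / (4 * (m:ℝ)) - 1 / (4 * ((m:ℝ) + 1))) = (4 * (m:ℝ) * ((m:ℝ) + 1) + 1) / (4 * (m:ℝ) * ((m:ℝ) + 1)) := by
  have hx : (1:ℝ) ≤ (m:ℝ) := by exact_mod_cast hm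
  have h1 : (m:ℝ) ≠ 0 := by nlinarith
  have h2 : (m:ℝ) + 1 ≠ 0 := by nlinarith
  field_simp
  ring

lemma GG_le (m : ℕ) (hm : 1 ≤ m) : GG m ≤ 1 + (1 / (4 * (m:ℝ)) - 1 / (4 * ((m:ℝ) + 1))) := by
  have hx : (1:ℝ) ≤ (m:ℝ) := by exact_mod_cast hm
  rw [bound_aux m hm]
  unfold GG
  rw [div_le_div_iff₀ (by nlinarith) (by nlinarith)]
  nlinarith

lemma KK_le (m : ℕ) (hm : 1 ≤ m) : KK m ≤ 1 + (1 / (4 * (m:ℝ)) - 1 / (4 * ((m:ℝ) + 1))) := by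
  have hx : (1:ℝ) ≤ (m:ℝ) := by exact_mod_cast hm
  rw [bound_aux m hm]
  unfold KK
  rw [div_le_div_iff₀ (by nlinarith) (by nlinarith)]
  nlinarith

lemma WW_eq (M : ℕ) (hM : 1 ≤ M) :
    WW (2 * M) = ∏ j ∈ range M, GG (M + j) ^ ee (M + j) := by
  unfold WW
  rw [pair_prod fr M]
  apply Finset.prod_congr rfl
  intro j _
  have hm : 1 ≤ M + j := by omega
  have hx : (1:ℝ) ≤ (M:ℝ) + (j:ℝ) := by push_cast [← Nat.cast_add]; exact_mod_cast hm
  apply zpow_div_helper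
  · exact ne_of_gt (fr_pos _ (by omega))
  · unfold fr GG
    push_cast
    have h1 : ((M:ℝ) + (j:ℝ)) ≠ 0 := by nlinarith
    have h2 : 2 * ((M:ℝ) + (j:ℝ)) + 1 ≠ 0 := by nlinarith
    have h3 : 2 * ((M:ℝ) + (j:ℝ)) + 2 ≠ 0 := by nlinarith
    field_simp
    ring

lemma UU_eq (M : ℕ) :
    UU (2 * M) = ∏ j ∈ range M, KK (M + j) ^ (-(ee (M + j))) := by
  unfold UU
  rw [pair_prod cc M]
  apply Finset.prod_congr rfl
  intro j _
  have key := zpow_div_helper (cc (2 * (M + j) + 1)) (cc (2 * (M + j))) (KK (M + j))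
    (ne_of_gt (cc_pos _)) (-(ee (M + j))) ?_
  · rw [neg_neg] at key
    rw [← key]
    ring
  · unfold cc KK
    push_cast
    have h1 : 2 * (2 * ((M:ℝ) + (j:ℝ))) + 3 ≠ 0 := by positivity
    have h2 : 4 * ((M:ℝ) + (j:ℝ)) + 2 ≠ 0 := by positivity
    have h3 : 4 * ((M:ℝ) + (j:ℝ)) + 5 ≠ 0 := by positivity
    field_simp
    ring

lemma WW_lim : Tendsto (fun M => WW (2 * M)) atTop (𝓝 1) := by
  apply Tendsto.congr' (f₁ := fun M => ∏ j ∈ range M, GG (M + j) ^ ee (M + j))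
  · filter_upwards [eventually_ge_atTop 1] with M hM
    exact (WW_eq M hM).symm
  · exact squeeze_main GG ee ee_cases GG_one_le GG_le

lemma neg_ee_cases (n : ℕ) : -(ee n) = 1 ∨ -(ee n) = -1 := by
  rcases ee_cases n with h | h
  · right; rw [h]
  · left; rw [h]; ring

lemma UU_lim : Tendsto (fun M => UU (2 * M)) atTop (𝓝 1) := by
  apply Tendsto.congr' (f₁ := fun M => ∏ j ∈ range M, KK (M + j) ^ (-(ee (M + j))))
  · filter_upwards [eventually_ge_atTop 1] with M _
    exact (UU_eq M).symm
  · exact squeeze_main KK (fun n => -(ee n)) neg_ee_cases KK_one_le KK_le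

lemma PP_pos (N : ℕ) : 0 < PP N :=
  Finset.prod_pos fun n _ => zpow_pos (pp_pos n) _

lemma sqrt_half : Real.sqrt (1 / 2) = Real.sqrt 2 / 2 := by
  rw [show (1/2 : ℝ) = 2⁻¹ by norm_num, Real.sqrt_inv]
  have h2 : Real.sqrt 2 * Real.sqrt 2 = 2 := Real.mul_self_sqrt (by norm_num)
  have hpos : 0 < Real.sqrt 2 := Real.sqrt_pos.mpr (by norm_num)
  rw [eq_div_iff (by norm_num : (2:ℝ) ≠ 0), inv_mul_eq_div, div_eq_iff (ne_of_gt hpos)]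
  nlinarith

lemma PP_lim : Tendsto (fun M => PP (2 * M)) atTop (𝓝 (Real.sqrt 2 / 2)) := by
  have h1 : Tendsto (fun M => WW (2 * M) / 2) atTop (𝓝 (1 / 2)) := WW_lim.div_const 2
  have h2 := (Real.continuous_sqrt.tendsto (1 / 2)).comp h1
  rw [sqrt_half] at h2
  apply Tendsto.congr' ?_ h2
  filter_upwards [eventually_ge_atTop 1] with M hM
  have hI := I1 (2 * M) (by omega)
  have : WW (2 * M) / 2 = PP (2 * M) ^ 2 := by rw [← hI]; ring
  simp only [Function.comp]
  rw [this, Real.sqrt_sq (le_of_lt (PP_pos _))]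

lemma SS_four_lim : Tendsto (fun M => SS (4 * M)) atTop (𝓝 (Real.sqrt 2 / 2)) := by
  have h : ∀ M, SS (4 * M) = PP (2 * M) * UU (2 * M) := by
    intro M
    rw [show 4 * M = 2 * (2 * M) by ring]
    exact I2 (2 * M)
  have := PP_lim.mul UU_lim
  rw [mul_one] at this
  exact Tendsto.congr (fun M => (h M).symm) this

lemma aa_lim : Tendsto (fun n => aa n) atTop (𝓝 1) := by
  have key : ∀ n : ℕ, aa n = (1 - 1 / ((n:ℝ) + 2)) * (1 - 1 / (2 * (n:ℝ) + 3)) := by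
    intro n
    have h0 : (0:ℝ) ≤ (n:ℝ) := Nat.cast_nonneg n
    unfold aa
    have h1 : (n:ℝ) + 2 ≠ 0 := by nlinarith
    have h2 : 2 * (n:ℝ) + 3 ≠ 0 := by nlinarith
    field_simp
    ring
  have t1 : Tendsto (fun n : ℕ => 1 - 1 / ((n:ℝ) + 2)) atTop (𝓝 1) := by
    have := (inv_lin_tendsto 1 2 (by norm_num) (by norm_num)).const_sub 1
    simpa using this
  have t2 : Tendsto (fun n : ℕ => 1 - 1 / (2 * (n:ℝ) + 3)) atTop (𝓝 1) := by
    have := (inv_lin_tendsto 2 3 (by norm_num) (by norm_num)).const_sub 1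
    simpa using this
  have := t1.mul t2
  rw [mul_one] at this
  exact Tendsto.congr (fun n => (key n).symm) this

lemma aa_lt_one (n : ℕ) : aa n < 1 := by
  have h0 : (0:ℝ) ≤ (n:ℝ) := Nat.cast_nonneg n
  unfold aa
  rw [div_lt_one (by nlinarith)]
  nlinarith

lemma term_lim : Tendsto (fun n => aa n ^ ee n) atTop (𝓝 1) := by
  have hinv : Tendsto (fun n => (aa n)⁻¹) atTop (𝓝 1) := by
    simpa using aa_lim.inv₀ one_ne_zero
  apply tendsto_of_tendsto_of_tendsto_of_le_of_le aa_lim hinv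
  · intro n
    simp only
    have h1 := aa_pos n
    have h2 := aa_lt_one n
    have haux : aa n ≤ (aa n)⁻¹ :=
      le_trans (le_of_lt h2) ((one_le_inv₀ h1).mpr (le_of_lt h2))
    rcases ee_cases n with h | h
    · rw [h, zpow_one]
    · rw [h, zpow_neg_one]
      exact haux
  · intro n
    simp only
    have h1 := aa_pos n
    have h2 := aa_lt_one n
    have haux : aa n ≤ (aa n)⁻¹ :=
      le_trans (le_of_lt h2) ((one_le_inv₀ h1).mpr (le_of_lt h2))
    rcases ee_cases n with h | h
    · rw [h, zpow_one]
      exact haux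
    · rw [h, zpow_neg_one]

lemma tendsto_mod4 {f : ℕ → ℝ} {L : ℝ}
    (h0 : Tendsto (fun M => f (4 * M)) atTop (𝓝 L))
    (h1 : Tendsto (fun M => f (4 * M + 1)) atTop (𝓝 L))
    (h2 : Tendsto (fun M => f (4 * M + 2)) atTop (𝓝 L))
    (h3 : Tendsto (fun M => f (4 * M + 3)) atTop (𝓝 L)) :
    Tendsto f atTop (𝓝 L) := by
  rw [Metric.tendsto_atTop] at h0 h1 h2 h3 ⊢
  intro eps heps
  obtain ⟨M0, H0⟩ := h0 eps heps
  obtain ⟨M1, H1⟩ := h1 eps heps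
  obtain ⟨M2, H2⟩ := h2 eps heps
  obtain ⟨M3, H3⟩ := h3 eps heps
  set B := (M0.max M1).max (M2.max M3) with hB
  have t0 : M0 ≤ B := le_trans (Nat.le_max_left _ _) (Nat.le_max_left _ _)
  have t1 : M1 ≤ B := le_trans (Nat.le_max_right _ _) (Nat.le_max_left _ _)
  have t2 : M2 ≤ B := le_trans (Nat.le_max_left _ _) (Nat.le_max_right _ _)
  have t3 : M3 ≤ B := le_trans (Nat.le_max_right _ _) (Nat.le_max_right _ _)
  refine ⟨4 * (B + 1), fun n hn => ?_⟩
  have hcase : n % 4 = 0 ∨ n % 4 = 1 ∨ n % 4 = 2 ∨ n % 4 = 3 := by omega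
  rcases hcase with h | h | h | h
  · have e : n = 4 * (n / 4) := by omega
    rw [e]
    exact H0 _ (by omega)
  · have e : n = 4 * (n / 4) + 1 := by omega
    rw [e]
    exact H1 _ (by omega)
  · have e : n = 4 * (n / 4) + 2 := by omega
    rw [e]
    exact H2 _ (by omega)
  · have e : n = 4 * (n / 4) + 3 := by omega
    rw [e]
    exact H3 _ (by omega)

lemma comp_term (c d : ℕ) (hc : 1 ≤ c) :
    Tendsto (fun M : ℕ => aa (c * M + d) ^ ee (c * M + d)) atTop (𝓝 1) := by
  have := term_lim.comp (four_mul_tendsto c d hc)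
  simpa [Function.comp_def] using this

lemma SS_succ (N : ℕ) : SS (N + 1) = SS N * aa N ^ ee N := prod_range_succ _ _

lemma SS_lim : Tendsto SS atTop (𝓝 (Real.sqrt 2 / 2)) := by
  have hc : (1:ℕ) ≤ 4 := by norm_num
  have l0 := SS_four_lim
  have l1 : Tendsto (fun M => SS (4 * M + 1)) atTop (𝓝 (Real.sqrt 2 / 2)) := by
    have := l0.mul (comp_term 4 0 hc)
    rw [mul_one] at this
    apply Tendsto.congr ?_ this
    intro M
    simp only [Nat.add_zero]
    exact (SS_succ (4 * M)).symm
  have l2 : Tendsto (fun M => SS (4 * M + 2)) atTop (𝓝 (Real.sqrt 2 / 2)) := by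
    have := l1.mul (comp_term 4 1 hc)
    rw [mul_one] at this
    apply Tendsto.congr ?_ this
    intro M
    exact (SS_succ (4 * M + 1)).symm
  have l3 : Tendsto (fun M => SS (4 * M + 3)) atTop (𝓝 (Real.sqrt 2 / 2)) := by
    have := l2.mul (comp_term 4 2 hc)
    rw [mul_one] at this
    apply Tendsto.congr ?_ this
    intro M
    exact (SS_succ (4 * M + 2)).symm
  exact tendsto_mod4 l0 l1 l2 l3

theorem prod_g :
    Tendsto (fun N => ∏ n ∈ Finset.range N,
        (((((n : ℝ) + 1) * (2 * (n : ℝ) + 2)) / (((n : ℝ) + 2) * (2 * (n : ℝ) + 3)))) ^ ((-1 : ℤ) ^ tm n))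
      atTop (𝓝 (Real.sqrt 2 / 2)) := by
  exact SS_lim
end
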